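/- (Peano) Let n ∈ ℕ, f : ℝ × ℝⁿ → ℝⁿ continuous, t₀ ∈ ℝ, x₀ ∈ ℝⁿ. Then there exist an open interval I containing t₀ and a differentiable x : I → ℝⁿ with x(t₀) = x₀ and x'(t) = f(t, x(t)) for all t ∈ I. -/

import Mathlib

open Filter Topology

section
open Set Metric

variable {E : Type*} [NormedAddCommGroup E] [NormedSpace ℝ E]

/-- Retraction onto the closed unit ball around `x₀`. -/
noncomputable def ballRetract (x₀ : E) (x : E) : E :=
  x₀ + (max 1 ‖x - x₀‖)⁻¹ • (x - x₀)

lemma ballRetract_mem (x₀ x : E) : ballRetract x₀ x ∈ closedBall x₀ 1 := by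
  have h1 : (0:ℝ) < max 1 ‖x - x₀‖ := lt_of_lt_of_le one_pos (le_max_left _ _)
  simp only [ballRetract, mem_closedBall, dist_eq_norm, add_sub_cancel_left]
  rw [norm_smul, norm_inv, Real.norm_eq_abs, abs_of_pos h1]
  rw [inv_mul_le_iff₀ h1]
  calc ‖x - x₀‖ ≤ max 1 ‖x - x₀‖ := le_max_right _ _
    _ ≤ (max 1 ‖x - x₀‖) * 1 := by simp

lemma ballRetract_of_mem {x₀ x : E} (hx : x ∈ closedBall x₀ 1) : ballRetract x₀ x = x := by
  rw [mem_closedBall, dist_eq_norm] at hx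
  simp [ballRetract, max_eq_left hx]

lemma lipschitzWith_ballRetract (x₀ : E) : LipschitzWith 2 (ballRetract x₀) := by
  apply LipschitzWith.of_dist_le_mul
  intro x y
  set a := max 1 ‖x - x₀‖ with ha
  set b := max 1 ‖y - x₀‖ with hb
  have ha1 : (1:ℝ) ≤ a := le_max_left _ _
  have hb1 : (1:ℝ) ≤ b := le_max_left _ _
  have ha0 : (0:ℝ) < a := lt_of_lt_of_le one_pos ha1
  have hb0 : (0:ℝ) < b := lt_of_lt_of_le one_pos hb1
  have hab : |b - a| ≤ ‖x - y‖ := by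
    have := abs_max_sub_max_le_abs ‖y - x₀‖ ‖x - x₀‖ 1
    rw [max_comm ‖y - x₀‖ 1, max_comm ‖x - x₀‖ 1] at this
    refine le_trans this ?_
    have := abs_norm_sub_norm_le (y - x₀) (x - x₀)
    simpa [norm_sub_rev, sub_sub_sub_cancel_right] using this
  rw [dist_eq_norm]
  have key : ballRetract x₀ x - ballRetract x₀ y
      = a⁻¹ • (x - y) + (a⁻¹ - b⁻¹) • (y - x₀) := by
    simp only [ballRetract]
    rw [add_sub_add_left_eq_sub, sub_smul, smul_sub a⁻¹ x y]
    rw [show a⁻¹ = (max 1 ‖x - x₀‖)⁻¹ from rfl, show b = max 1 ‖y - x₀‖ from rfl]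
    module
  rw [key]
  have h2 : ‖(a⁻¹ - b⁻¹) • (y - x₀)‖ ≤ ‖x - y‖ := by
    rw [norm_smul, Real.norm_eq_abs]
    have : a⁻¹ - b⁻¹ = (b - a) / (a * b) := by
      field_simp
    rw [this, abs_div, abs_of_pos (mul_pos ha0 hb0)]
    have hyb : ‖y - x₀‖ ≤ b := le_max_right _ _
    calc |b - a| / (a * b) * ‖y - x₀‖ ≤ ‖x - y‖ / (a * b) * b := by
          apply mul_le_mul ?_ hyb (norm_nonneg _) (by positivity)
          gcongr
      _ = ‖x - y‖ / a := by field_simp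
      _ ≤ ‖x - y‖ := by
          apply div_le_self (norm_nonneg _) ha1
  calc ‖a⁻¹ • (x - y) + (a⁻¹ - b⁻¹) • (y - x₀)‖
      ≤ ‖a⁻¹ • (x - y)‖ + ‖(a⁻¹ - b⁻¹) • (y - x₀)‖ := norm_add_le _ _
    _ ≤ ‖x - y‖ + ‖x - y‖ := by
        refine add_le_add ?_ h2
        rw [norm_smul, Real.norm_eq_abs, abs_of_pos (inv_pos.2 ha0)]
        calc a⁻¹ * ‖x - y‖ ≤ 1 * ‖x - y‖ := by
              apply mul_le_mul_of_nonneg_right (inv_le_one_of_one_le₀ ha1) (norm_nonneg _)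
            _ = ‖x - y‖ := one_mul _
    _ = 2 * dist x y := by rw [dist_eq_norm]; ring

end
section
open Set Metric

/-- Scalar inf-convolution Lipschitz approximation. -/
lemma lipschitz_approx_scalar {X : Type*} [MetricSpace X] [Nonempty X] (g : X → ℝ)
    (hg : UniformContinuous g) {M : ℝ} (hM : 0 ≤ M) (hb : ∀ p, |g p| ≤ M)
    {ε : ℝ} (hε : 0 < ε) :
    ∃ k : ℝ, 0 ≤ k ∧ ∃ h : X → ℝ,
      (∀ p q, |h p - h q| ≤ k * dist p q) ∧ ∀ p, |h p - g p| ≤ ε := by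
  obtain ⟨δ, hδ, hδ'⟩ := Metric.uniformContinuous_iff.1 hg ε hε
  set k : ℝ := 2 * M / δ with hk
  have hk0 : 0 ≤ k := by positivity
  set h : X → ℝ := fun p => ⨅ q, (g q + k * dist p q) with hh
  have hbdd : ∀ p : X, BddBelow (range fun q => g q + k * dist p q) := by
    intro p
    refine ⟨-M, fun z hz => ?_⟩
    obtain ⟨q, rfl⟩ := hz
    have h1 := (abs_le.1 (hb q)).1
    have h2 : 0 ≤ k * dist p q := mul_nonneg hk0 dist_nonneg
    simp only
    linarith
  have hle : ∀ p p' : X, h p ≤ h p' + k * dist p p' := by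
    intro p p'
    rw [hh]
    simp only
    rw [← sub_le_iff_le_add]
    refine le_ciInf fun q => ?_
    rw [sub_le_iff_le_add]
    calc (⨅ q, (g q + k * dist p q)) ≤ g q + k * dist p q := ciInf_le (hbdd p) q
      _ ≤ (g q + k * dist p' q) + k * dist p p' := by
          have h3 := dist_triangle p p' q
          nlinarith
  refine ⟨k, hk0, h, ?_, ?_⟩
  · intro p p'
    rw [abs_sub_le_iff]
    refine ⟨?_, ?_⟩
    · rw [sub_le_iff_le_add, add_comm]; exact hle p p'
    · rw [sub_le_iff_le_add, add_comm, dist_comm p p']; exact hle p' p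
  · intro p
    rw [abs_sub_le_iff]
    refine ⟨?_, ?_⟩
    · have h1 : h p ≤ g p + k * dist p p := ciInf_le (hbdd p) p
      simp only [dist_self, mul_zero, add_zero] at h1
      linarith
    · have key : g p - ε ≤ h p := by
        rw [hh]
        refine le_ciInf fun q => ?_
        rcases lt_or_ge (dist p q) δ with hcase | hcase
        · have h1 := abs_lt.1 (by simpa [Real.dist_eq] using hδ' hcase)
          have h2 : 0 ≤ k * dist p q := mul_nonneg hk0 dist_nonneg

          linarith [h1.2]
        · have h1 : 2 * M ≤ k * dist p q := by
            rw [hk, div_mul_eq_mul_div, le_div_iff₀ hδ]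
            nlinarith
          have h2 := (abs_le.1 (hb q)).1
          have h3 := (abs_le.1 (hb p)).2

          linarith
      linarith

end
section
open Set Metric Finset

lemma coord_abs_le_norm {n : ℕ} (x : EuclideanSpace ℝ (Fin n)) (i : Fin n) :
    |x i| ≤ ‖x‖ := by
  rw [EuclideanSpace.norm_eq]
  rw [show |x i| = Real.sqrt (‖x i‖ ^ 2) by rw [Real.sqrt_sq_eq_abs, Real.norm_eq_abs, abs_abs]]
  apply Real.sqrt_le_sqrt
  exact Finset.single_le_sum (f := fun j => ‖x j‖ ^ 2) (fun j _ => by positivity) (mem_univ i)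

lemma lipschitz_approx_euclidean {n : ℕ} {X : Type*} [MetricSpace X] [Nonempty X]
    (g : X → EuclideanSpace ℝ (Fin n)) (hg : UniformContinuous g)
    {M : ℝ} (hM : 0 ≤ M) (hb : ∀ p, ‖g p‖ ≤ M) {ε : ℝ} (hε : 0 < ε) :
    ∃ (c : NNReal) (h : X → EuclideanSpace ℝ (Fin n)),
      LipschitzWith c h ∧ ∀ p, ‖h p - g p‖ ≤ ε := by
  have hε' : (0:ℝ) < ε / (n + 1) := by positivity
  have key : ∀ i : Fin n, ∃ k : ℝ, 0 ≤ k ∧ ∃ h : X → ℝ,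
      (∀ p q, |h p - h q| ≤ k * dist p q) ∧ ∀ p, |h p - g p i| ≤ ε / (n + 1) := by
    intro i
    apply lipschitz_approx_scalar (fun p => g p i)
    · exact (EuclideanSpace.proj (𝕜 := ℝ) i).uniformContinuous.comp hg
    · exact hM
    · exact fun p => (coord_abs_le_norm (g p) i).trans (hb p)
    · exact hε'
  choose k hk0 h hlip happ using key
  set K : ℝ := ∑ i : Fin n, k i with hK
  have hK0 : 0 ≤ K := Finset.sum_nonneg fun i _ => hk0 i
  have hki : ∀ i : Fin n, k i ≤ K :=
    fun i => Finset.single_le_sum (fun j _ => hk0 j) (mem_univ i)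
  set H : X → EuclideanSpace ℝ (Fin n) := fun p => WithLp.toLp 2 (fun i => h i p) with hH
  refine ⟨Real.toNNReal ((n + 1) * K), H, ?_, ?_⟩
  · apply LipschitzWith.of_dist_le_mul
    intro p q
    rw [show dist (H p) (H q) = Real.sqrt (∑ i, dist (h i p) (h i q) ^ 2) from
      EuclideanSpace.dist_eq _ _]
    have step : ∀ i : Fin n, dist (h i p) (h i q) ^ 2 ≤ (K * dist p q) ^ 2 := by
      intro i
      have h1 : dist (h i p) (h i q) ≤ K * dist p q := by
        rw [Real.dist_eq]
        exact (hlip i p q).trans (mul_le_mul_of_nonneg_right (hki i) dist_nonneg)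
      exact pow_le_pow_left₀ dist_nonneg h1 2
    calc Real.sqrt (∑ i, dist (h i p) (h i q) ^ 2)
        ≤ Real.sqrt (∑ _i : Fin n, (K * dist p q) ^ 2) :=
          Real.sqrt_le_sqrt (Finset.sum_le_sum fun i _ => step i)
      _ = Real.sqrt ((n : ℝ) * (K * dist p q) ^ 2) := by
          rw [Finset.sum_const, card_univ, Fintype.card_fin, nsmul_eq_mul]
      _ ≤ Real.sqrt (((n + 1) * (K * dist p q)) ^ 2) := by
          apply Real.sqrt_le_sqrt
          have : (0:ℝ) ≤ K * dist p q := mul_nonneg hK0 dist_nonneg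
          nlinarith [Nat.cast_nonneg (α := ℝ) n]
      _ = (n + 1) * (K * dist p q) := by
          apply Real.sqrt_sq
          positivity
      _ = ↑(Real.toNNReal ((n + 1) * K)) * dist p q := by
          rw [Real.coe_toNNReal _ (by positivity)]
          ring
  · intro p
    have heq : ‖H p - g p‖ = Real.sqrt (∑ i, ‖h i p - g p i‖ ^ 2) := by
      rw [EuclideanSpace.norm_eq]
      rfl
    rw [heq]
    calc Real.sqrt (∑ i, ‖h i p - g p i‖ ^ 2)
        ≤ Real.sqrt (∑ _i : Fin n, (ε / (n + 1)) ^ 2) := by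
          apply Real.sqrt_le_sqrt
          apply Finset.sum_le_sum
          intro i _
          apply pow_le_pow_left₀ (norm_nonneg _)
          simpa [Real.norm_eq_abs] using happ i p
      _ = Real.sqrt ((n : ℝ) * (ε / (n + 1)) ^ 2) := by
          rw [Finset.sum_const, card_univ, Fintype.card_fin, nsmul_eq_mul]
      _ ≤ Real.sqrt (ε ^ 2) := by
          apply Real.sqrt_le_sqrt
          rw [div_pow, mul_div_assoc', div_le_iff₀ (by positivity)]
          have hn : (n:ℝ) ≤ ((n:ℝ) + 1) ^ 2 := by nlinarith [Nat.cast_nonneg (α := ℝ) n]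
          nlinarith [mul_le_mul_of_nonneg_left hn (sq_nonneg ε)]
      _ = ε := Real.sqrt_sq hε.le

end
section
open Set Metric intervalIntegral

lemma eq_add_integral_of_hasDerivAt_Ioo {E : Type*} [NormedAddCommGroup E] [NormedSpace ℝ E] [CompleteSpace E]
    {a b t₀ : ℝ} (ht₀ : t₀ ∈ Icc a b) {g G : ℝ → E}
    (hg : ContinuousOn g (Icc a b)) (hG : ContinuousOn G (Icc a b))
    (hd : ∀ t ∈ Ioo a b, HasDerivAt g (G t) t) {t : ℝ} (ht : t ∈ Icc a b) :
    g t = g t₀ + ∫ s in t₀..t, G s := by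
  rcases le_total t₀ t with h | h
  · have key : ∫ s in t₀..t, G s = g t - g t₀ := by
      apply integral_eq_sub_of_hasDeriv_right_of_le h
        (hg.mono (Icc_subset_Icc ht₀.1 ht.2))
        (fun x hx => (hd x ⟨lt_of_le_of_lt ht₀.1 hx.1, lt_of_lt_of_le hx.2 ht.2⟩).hasDerivWithinAt)
      apply ContinuousOn.intervalIntegrable
      rw [uIcc_of_le h]
      exact hG.mono (Icc_subset_Icc ht₀.1 ht.2)
    rw [key]; abel
  · have key : ∫ s in t..t₀, G s = g t₀ - g t := by
      apply integral_eq_sub_of_hasDeriv_right_of_le h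
        (hg.mono (Icc_subset_Icc ht.1 ht₀.2))
        (fun x hx => (hd x ⟨lt_of_le_of_lt ht.1 hx.1, lt_of_lt_of_le hx.2 ht₀.2⟩).hasDerivWithinAt)
      apply ContinuousOn.intervalIntegrable
      rw [uIcc_of_le h]
      exact hG.mono (Icc_subset_Icc ht.1 ht₀.2)
    rw [integral_symm, key]; abel

end
section
open Set Metric Filter Topology

lemma lipschitz_seq_compact {n : ℕ} {a b t₀ : ℝ} (ht₀ : t₀ ∈ Icc a b)
    (C : NNReal) (x₀ : EuclideanSpace ℝ (Fin n))
    (hC1 : ∀ s ∈ Icc a b, (C : ℝ) * |s - t₀| ≤ 1)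
    (u : ℕ → C(Icc a b, EuclideanSpace ℝ (Fin n)))
    (hu : ∀ m, LipschitzWith C (u m)) (hu0 : ∀ m, u m ⟨t₀, ht₀⟩ = x₀) :
    ∃ y : C(Icc a b, EuclideanSpace ℝ (Fin n)), LipschitzWith C y ∧ y ⟨t₀, ht₀⟩ = x₀ ∧
      ∃ φ : ℕ → ℕ, StrictMono φ ∧ Tendsto (fun m => u (φ m)) atTop (𝓝 y) := by
  set p₀ : Icc a b := ⟨t₀, ht₀⟩
  set S : Set C(Icc a b, EuclideanSpace ℝ (Fin n)) :=
    {w : C(Icc a b, EuclideanSpace ℝ (Fin n)) | LipschitzWith C w ∧ w p₀ = x₀} with hS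
  have hdist : ∀ (w : Icc a b → EuclideanSpace ℝ (Fin n)), LipschitzWith C w → w p₀ = x₀ →
      ∀ p : Icc a b, w p ∈ closedBall x₀ 1 := by
    intro w hw hw0 p
    rw [mem_closedBall]
    calc dist (w p) x₀ = dist (w p) (w p₀) := by rw [hw0]
      _ ≤ C * dist p p₀ := hw.dist_le_mul p p₀
      _ ≤ 1 := by
          have : dist p p₀ = |((p : ℝ)) - t₀| := rfl
          rw [this]
          exact hC1 p p.2
  have hcomp : IsCompact S := by
    apply ArzelaAscoli.isCompact_of_equicontinuous
    · have himg : (ContinuousMap.toFun '' S) =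
          {w : Icc a b → EuclideanSpace ℝ (Fin n) | LipschitzWith C w ∧ w p₀ = x₀} := by
        ext w
        constructor
        · rintro ⟨v, hv, rfl⟩
          exact hv
        · rintro ⟨h1, h2⟩
          exact ⟨⟨w, h1.continuous⟩, ⟨h1, h2⟩, rfl⟩
      rw [himg]
      apply IsCompact.of_isClosed_subset
        (isCompact_univ_pi fun _ : Icc a b => isCompact_closedBall x₀ 1)
      · have hset : {w : Icc a b → EuclideanSpace ℝ (Fin n) | LipschitzWith C w ∧ w p₀ = x₀} =
            (⋂ (p : Icc a b), ⋂ (q : Icc a b), {w | dist (w p) (w q) ≤ C * dist p q}) ∩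
              {w | w p₀ = x₀} := by
          ext w
          simp only [mem_setOf_eq, mem_inter_iff, mem_iInter, lipschitzWith_iff_dist_le_mul]
        rw [hset]
        apply IsClosed.inter
        · exact isClosed_iInter fun p => isClosed_iInter fun q =>
            isClosed_le (Continuous.dist (continuous_apply p) (continuous_apply q)) continuous_const
        · exact isClosed_eq (continuous_apply p₀) continuous_const
      · rintro w ⟨h1, h2⟩
        rw [mem_univ_pi]
        exact fun p => hdist w h1 h2 p
    · apply Metric.equicontinuous_of_continuity_modulus (fun d => (C : ℝ) * d)
      · have : Tendsto (fun d : ℝ => (C : ℝ) * d) (𝓝 0) (𝓝 ((C : ℝ) * 0)) :=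
          (continuous_const.mul continuous_id).tendsto 0
        simpa using this
      · rintro p q ⟨w, hw⟩
        exact hw.1.dist_le_mul p q
  have hmem : ∀ m, u m ∈ S := fun m => ⟨hu m, hu0 m⟩
  obtain ⟨y, hyS, φ, hφ, hconv⟩ := hcomp.tendsto_subseq hmem
  exact ⟨y, hyS.1, hyS.2, φ, hφ, hconv⟩

end
section
open Set Metric Filter Topology intervalIntegral
variable {n : ℕ}
local notation "E" => EuclideanSpace ℝ (Fin n)

lemma approx_solution (F : ℝ × E → E) (hFuc : UniformContinuous F)
    {M : ℝ} (hM : 0 ≤ M) (hFb : ∀ p, ‖F p‖ ≤ M) (t₀ : ℝ) (x₀ : E)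
    {ε : ℝ} (hε : 0 < ε) (hε1 : ε ≤ 1) :
    ∃ α : ℝ → E, α t₀ = x₀ ∧
      LipschitzOnWith (Real.toNNReal (M + 1)) α (Icc (t₀ - 1/(M+2)) (t₀ + 1/(M+2))) ∧
      (∀ t ∈ Icc (t₀ - 1/(M+2)) (t₀ + 1/(M+2)), α t ∈ closedBall x₀ 1) ∧
      (∀ t ∈ Icc (t₀ - 1/(M+2)) (t₀ + 1/(M+2)),
        ‖α t - (x₀ + ∫ s in t₀..t, F (s, α s))‖ ≤ (1/(M+2)) * ε) := by
  set T : ℝ := 1/(M+2) with hTdef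
  have hT0 : 0 < T := by positivity
  have hM20 : (0:ℝ) < M + 2 := by linarith
  have hCT : (M + 1) * T ≤ 1 := by
    rw [hTdef, mul_one_div, div_le_one hM20]; linarith
  have ht₀mem : t₀ ∈ Icc (t₀ - T) (t₀ + T) := by
    constructor <;> simp <;> linarith
  obtain ⟨c, h, hlip, happ⟩ := lipschitz_approx_euclidean F hFuc hM hFb hε
  have hhb : ∀ p, ‖h p‖ ≤ M + 1 := by
    intro p
    calc ‖h p‖ = ‖F p + (h p - F p)‖ := by rw [add_sub_cancel]
      _ ≤ ‖F p‖ + ‖h p - F p‖ := norm_add_le _ _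
      _ ≤ M + 1 := add_le_add (hFb p) ((happ p).trans hε1)
  have hpl : IsPicardLindelof (fun t x => h (t, x)) (tmin := t₀ - T) (tmax := t₀ + T)
      ⟨t₀, ht₀mem⟩ x₀ 1 0 (Real.toNNReal (M + 1)) c := by
    constructor
    · intro t _
      have : LipschitzWith c (fun x : E => h (t, x)) := by
        have h1 : LipschitzWith 1 (fun x : E => (t, x)) := LipschitzWith.prodMk_left t
        have := hlip.comp h1
        rw [mul_one] at this; exact this
      exact this.lipschitzOnWith
    · intro x _
      exact (hlip.continuous.comp (continuous_id.prodMk continuous_const)).continuousOn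
    · intro t _ x _
      rw [Real.coe_toNNReal _ (by linarith)]
      exact hhb (t, x)
    · have : max (t₀ + T - t₀) (t₀ - (t₀ - T)) = T := by
        rw [show t₀ + T - t₀ = T by ring, show t₀ - (t₀ - T) = T by ring, max_self]
      simp only [NNReal.coe_one, NNReal.coe_zero, sub_zero]
      rw [Real.coe_toNNReal _ (by linarith), this]
      exact hCT
  obtain ⟨α, hα0', hαd⟩ := hpl.exists_eq_forall_mem_Icc_hasDerivWithinAt₀
  have hα0 : α t₀ = x₀ := hα0'
  have hbound : ∀ t ∈ Icc (t₀ - T) (t₀ + T), ‖h (t, α t)‖₊ ≤ Real.toNNReal (M + 1) := by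
    intro t _
    rw [← Real.toNNReal_coe (r := ‖h (t, α t)‖₊)]
    apply Real.toNNReal_le_toNNReal
    rw [coe_nnnorm]
    exact hhb _
  have hαlip : LipschitzOnWith (Real.toNNReal (M + 1)) α (Icc (t₀ - T) (t₀ + T)) :=
    (convex_Icc _ _).lipschitzOnWith_of_nnnorm_hasDerivWithin_le hαd hbound
  have hdistT : ∀ t ∈ Icc (t₀ - T) (t₀ + T), dist t t₀ ≤ T := by
    intro t ht
    rw [Real.dist_eq, abs_le]
    constructor <;> [linarith [ht.1]; linarith [ht.2]]
  have hαball : ∀ t ∈ Icc (t₀ - T) (t₀ + T), α t ∈ closedBall x₀ 1 := by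
    intro t ht
    rw [mem_closedBall]
    calc dist (α t) x₀ = dist (α t) (α t₀) := by rw [hα0]
      _ ≤ Real.toNNReal (M + 1) * dist t t₀ := hαlip.dist_le_mul t ht t₀ ht₀mem
      _ ≤ (M + 1) * T := by
          rw [Real.coe_toNNReal _ (by linarith)]
          exact mul_le_mul_of_nonneg_left (hdistT t ht) (by linarith)
      _ ≤ 1 := hCT
  have hαcont : ContinuousOn α (Icc (t₀ - T) (t₀ + T)) := hαlip.continuousOn
  have hGcont : ContinuousOn (fun s => h (s, α s)) (Icc (t₀ - T) (t₀ + T)) :=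
    hlip.continuous.comp_continuousOn (continuousOn_id.prodMk hαcont)
  have hFα : ContinuousOn (fun s => F (s, α s)) (Icc (t₀ - T) (t₀ + T)) :=
    hFuc.continuous.comp_continuousOn (continuousOn_id.prodMk hαcont)
  have hint : ∀ t ∈ Icc (t₀ - T) (t₀ + T), α t = x₀ + ∫ s in t₀..t, h (s, α s) := by
    intro t ht
    rw [← hα0]
    apply eq_add_integral_of_hasDerivAt_Ioo ht₀mem hαcont hGcont ?_ ht
    intro s hs
    exact (hαd s (Ioo_subset_Icc_self hs)).hasDerivAt (Icc_mem_nhds hs.1 hs.2)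
  refine ⟨α, hα0, hαlip, hαball, ?_⟩
  intro t ht
  rw [hint t ht]
  have hsub : uIcc t₀ t ⊆ Icc (t₀ - T) (t₀ + T) := uIcc_subset_Icc ht₀mem ht
  have hint1 : IntervalIntegrable (fun s => h (s, α s)) MeasureTheory.volume t₀ t :=
    (hGcont.mono hsub).intervalIntegrable
  have hint2 : IntervalIntegrable (fun s => F (s, α s)) MeasureTheory.volume t₀ t :=
    (hFα.mono hsub).intervalIntegrable
  have key : (x₀ + ∫ s in t₀..t, h (s, α s)) - (x₀ + ∫ s in t₀..t, F (s, α s))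
      = ∫ s in t₀..t, (h (s, α s) - F (s, α s)) := by
    rw [integral_sub hint1 hint2]; abel
  rw [key]
  calc ‖∫ s in t₀..t, (h (s, α s) - F (s, α s))‖ ≤ ε * |t - t₀| := by
        apply norm_integral_le_of_norm_le_const
        intro s _
        exact happ _
    _ ≤ T * ε := by
        rw [mul_comm]
        apply mul_le_mul_of_nonneg_right ?_ hε.le
        rw [← Real.dist_eq]
        exact hdistT t ht

end
section
open Set Metric Filter Topology intervalIntegral

set_option maxHeartbeats 1000000 in
/-- Peano's existence theorem in `ℝⁿ`. -/
theorem peano_existence (n : ℕ)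
    (f : ℝ × EuclideanSpace ℝ (Fin n) → EuclideanSpace ℝ (Fin n))
    (hf : Continuous f) (t₀ : ℝ) (x₀ : EuclideanSpace ℝ (Fin n)) :
    ∃ (a b : ℝ), a < b ∧ t₀ ∈ Set.Ioo a b ∧
      ∃ x : ℝ → EuclideanSpace ℝ (Fin n), x t₀ = x₀ ∧
        ∀ t ∈ Set.Ioo a b, HasDerivAt x (f (t, x t)) t := by
  classical
  have h11 : t₀ - 1 ≤ t₀ + 1 := by linarith
  set cl : ℝ → ℝ := fun t => ↑(projIcc (t₀ - 1) (t₀ + 1) h11 t) with hcl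
  have hclLip : LipschitzWith 1 cl := by
    have := (LipschitzWith.subtype_val (Icc (t₀-1) (t₀+1))).comp (LipschitzWith.projIcc h11)
    rw [mul_one] at this; exact this
  have hclmem : ∀ t, cl t ∈ Icc (t₀ - 1) (t₀ + 1) := fun t => (projIcc (t₀-1) (t₀+1) h11 t).2
  have hcleq : ∀ t ∈ Icc (t₀ - 1) (t₀ + 1), cl t = t := by
    intro t ht
    rw [hcl]
    simp [projIcc_of_mem h11 ht]
  set K : Set (ℝ × EuclideanSpace ℝ (Fin n)) := Icc (t₀-1) (t₀+1) ×ˢ closedBall x₀ 1 with hKdef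
  have hK : IsCompact K := isCompact_Icc.prod (isCompact_closedBall _ _)
  set F : ℝ × EuclideanSpace ℝ (Fin n) → EuclideanSpace ℝ (Fin n) :=
    fun p => f (cl p.1, ballRetract x₀ p.2) with hFdef
  have hFK : ∀ p : ℝ × EuclideanSpace ℝ (Fin n), (cl p.1, ballRetract x₀ p.2) ∈ K :=
    fun p => ⟨hclmem _, ballRetract_mem _ _⟩
  obtain ⟨M₀, hM₀⟩ := hK.exists_bound_of_continuousOn hf.continuousOn
  set M : ℝ := max M₀ 0 with hMdef
  have hM : 0 ≤ M := le_max_right _ _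
  have hFb : ∀ p, ‖F p‖ ≤ M := fun p => le_trans (hM₀ _ (hFK p)) (le_max_left _ _)
  have hFeq : ∀ p ∈ K, F p = f p := by
    rintro ⟨t, x⟩ ⟨ht, hx⟩
    rw [hFdef]
    simp only
    rw [hcleq t ht, ballRetract_of_mem hx]
  have hFuc : UniformContinuous F := by
    haveI : CompactSpace K := isCompact_iff_compactSpace.mp hK
    have hg : UniformContinuous (fun p : ℝ × EuclideanSpace ℝ (Fin n) =>
        (⟨(cl p.1, ballRetract x₀ p.2), hFK p⟩ : K)) := by
      apply UniformContinuous.subtype_mk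
      exact ((hclLip.uniformContinuous).comp uniformContinuous_fst).prodMk
        (((lipschitzWith_ballRetract x₀).uniformContinuous).comp uniformContinuous_snd)
    have hfK : UniformContinuous (fun q : K => f q) :=
      CompactSpace.uniformContinuous_of_continuous (hf.comp continuous_subtype_val)
    exact hfK.comp hg
  have hFcont : Continuous F := hFuc.continuous
  -- constants
  set T : ℝ := 1/(M+2) with hTdef
  have hM20 : (0:ℝ) < M + 2 := by linarith
  have hT0 : 0 < T := by positivity
  have hT1 : T ≤ 1 := by rw [hTdef]; rw [div_le_one hM20]; linarith
  have hCT : (M + 1) * T ≤ 1 := by rw [hTdef, mul_one_div, div_le_one hM20]; linarith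
  have ht₀mem : t₀ ∈ Icc (t₀ - T) (t₀ + T) := by constructor <;> linarith
  have hIccsub : Icc (t₀ - T) (t₀ + T) ⊆ Icc (t₀ - 1) (t₀ + 1) :=
    Icc_subset_Icc (by linarith) (by linarith)
  set C' : NNReal := Real.toNNReal (M + 1) with hC'def
  have hC'coe : (C' : ℝ) = M + 1 := Real.coe_toNNReal _ (by linarith)
  -- approximate solutions
  have happrox : ∀ m : ℕ, ∃ α : ℝ → EuclideanSpace ℝ (Fin n), α t₀ = x₀ ∧
      LipschitzOnWith C' α (Icc (t₀ - T) (t₀ + T)) ∧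
      (∀ t ∈ Icc (t₀ - T) (t₀ + T), α t ∈ closedBall x₀ 1) ∧
      (∀ t ∈ Icc (t₀ - T) (t₀ + T),
        ‖α t - (x₀ + ∫ s in t₀..t, F (s, α s))‖ ≤ T * (1/(m+1))) := by
    intro m
    have h1 : (0:ℝ) < 1/(m+1) := by positivity
    have h2 : (1:ℝ)/(m+1) ≤ 1 := by
      rw [div_le_one (by positivity)]
      simp
    exact approx_solution F hFuc hM hFb t₀ x₀ h1 h2
  choose α hα0 hαlip hαball hαerr using happrox
  -- Arzela-Ascoli
  set u : ℕ → C(Icc (t₀ - T) (t₀ + T), EuclideanSpace ℝ (Fin n)) :=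
    fun m => ⟨(Icc (t₀ - T) (t₀ + T)).restrict (α m),
      (lipschitzOnWith_iff_restrict.mp (hαlip m)).continuous⟩ with hudef
  have hulip : ∀ m, LipschitzWith C' (u m) :=
    fun m => lipschitzOnWith_iff_restrict.mp (hαlip m)
  have hu0 : ∀ m, u m ⟨t₀, ht₀mem⟩ = x₀ := fun m => hα0 m
  have hC1 : ∀ s ∈ Icc (t₀ - T) (t₀ + T), (C' : ℝ) * |s - t₀| ≤ 1 := by
    intro s hs
    rw [hC'coe]
    calc (M + 1) * |s - t₀| ≤ (M + 1) * T := by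
          apply mul_le_mul_of_nonneg_left ?_ (by linarith)
          rw [abs_le]
          constructor <;> [linarith [hs.1]; linarith [hs.2]]
      _ ≤ 1 := hCT
  obtain ⟨y, hylip, hy0, φ, hφ, hconv⟩ := lipschitz_seq_compact ht₀mem C' x₀ hC1 u hulip hu0
  -- the limit function extended to ℝ
  set Y : ℝ → EuclideanSpace ℝ (Fin n) :=
    fun t => y (projIcc (t₀ - T) (t₀ + T) (by linarith) t) with hYdef
  have hYcont : Continuous Y := y.continuous.comp continuous_projIcc
  have hYicc : ∀ t (ht : t ∈ Icc (t₀ - T) (t₀ + T)), Y t = y ⟨t, ht⟩ := by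
    intro t ht
    rw [hYdef]
    exact congrArg y (projIcc_of_mem _ ht)
  have hYball : ∀ t ∈ Icc (t₀ - T) (t₀ + T), Y t ∈ closedBall x₀ 1 := by
    intro t ht
    rw [hYicc t ht, mem_closedBall]
    calc dist (y ⟨t, ht⟩) x₀ = dist (y ⟨t, ht⟩) (y ⟨t₀, ht₀mem⟩) := by rw [hy0]
      _ ≤ (C' : ℝ) * dist (⟨t, ht⟩ : Icc (t₀ - T) (t₀ + T)) ⟨t₀, ht₀mem⟩ :=
          hylip.dist_le_mul _ _
      _ ≤ 1 := by
          have : dist (⟨t, ht⟩ : Icc (t₀ - T) (t₀ + T)) ⟨t₀, ht₀mem⟩ = |t - t₀| := rfl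
          rw [this]
          exact hC1 t ht
  -- limit integral equation
  have hlimit : ∀ t (ht : t ∈ Icc (t₀ - T) (t₀ + T)),
      Y t = x₀ + ∫ s in t₀..t, F (s, Y s) := by
    intro t ht
    apply eq_of_forall_dist_le
    intro ε hε
    set ε₁ : ℝ := ε / (3 * (T + 1)) with hε₁def
    have hε₁ : 0 < ε₁ := by positivity
    obtain ⟨δ, hδ0, hδ'⟩ := Metric.uniformContinuous_iff.1 hFuc ε₁ hε₁
    set r : ℝ := min δ (ε/3) with hrdef
    have hr0 : 0 < r := lt_min hδ0 (by positivity)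
    obtain ⟨N₁, hN₁⟩ := Metric.tendsto_atTop.1 hconv r hr0
    obtain ⟨N₂, hN₂⟩ := exists_nat_gt (3 * T / ε)
    set m : ℕ := max N₁ N₂ with hmdef
    set k : ℕ := φ m with hkdef
    have hkm : m ≤ k := hφ.le_apply
    have hclose : dist (u k) y < r := hN₁ m (le_max_left _ _)
    have hsub : uIcc t₀ t ⊆ Icc (t₀ - T) (t₀ + T) := uIcc_subset_Icc ht₀mem ht
    have hsub' : Set.uIoc t₀ t ⊆ Icc (t₀ - T) (t₀ + T) :=
      fun s hs => hsub (uIoc_subset_uIcc hs)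
    -- three distances
    have d1 : dist (Y t) (α k t) ≤ ε/3 := by
      rw [hYicc t ht]
      have : α k t = u k ⟨t, ht⟩ := rfl
      rw [this, dist_comm]
      exact le_trans (ContinuousMap.dist_apply_le_dist _) (le_trans hclose.le (min_le_right _ _))
    have d2 : dist (α k t) (x₀ + ∫ s in t₀..t, F (s, α k s)) ≤ ε/3 := by
      rw [dist_eq_norm]
      refine le_trans (hαerr k t ht) ?_
      have hk2 : (N₂ : ℝ) ≤ (k : ℝ) := by
        exact_mod_cast le_trans (le_max_right N₁ N₂) hkm
      have h3T : 3 * T < ε * ((k:ℝ) + 1) := by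
        have h1 : 3 * T / ε < (N₂ : ℝ) := hN₂
        have h2 : 3 * T < ε * (N₂ : ℝ) := by
          rw [div_lt_iff₀ hε] at h1
          linarith [h1]
        nlinarith [hε.le, hk2]
      rw [mul_one_div, div_le_div_iff₀ (by positivity) (by norm_num : (0:ℝ) < 3)]
      linarith
    have d3 : dist (x₀ + ∫ s in t₀..t, F (s, α k s)) (x₀ + ∫ s in t₀..t, F (s, Y s)) ≤ ε/3 := by
      rw [dist_eq_norm]
      have hcont1 : ContinuousOn (fun s => F (s, α k s)) (Icc (t₀ - T) (t₀ + T)) :=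
        hFcont.comp_continuousOn (continuousOn_id.prodMk (hαlip k).continuousOn)
      have hcont2 : Continuous (fun s => F (s, Y s)) :=
        hFcont.comp (continuous_id.prodMk hYcont)
      have hi1 : IntervalIntegrable (fun s => F (s, α k s)) MeasureTheory.volume t₀ t :=
        (hcont1.mono hsub).intervalIntegrable
      have hi2 : IntervalIntegrable (fun s => F (s, Y s)) MeasureTheory.volume t₀ t :=
        hcont2.intervalIntegrable _ _
      have key : (x₀ + ∫ s in t₀..t, F (s, α k s)) - (x₀ + ∫ s in t₀..t, F (s, Y s))
          = ∫ s in t₀..t, (F (s, α k s) - F (s, Y s)) := by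
        rw [integral_sub hi1 hi2]; abel
      rw [key]
      have hptwise : ∀ s ∈ Set.uIoc t₀ t, ‖F (s, α k s) - F (s, Y s)‖ ≤ ε₁ := by
        intro s hs
        have hsmem := hsub' hs
        have hdd : dist (s, α k s) (s, Y s) < δ := by
          rw [Prod.dist_eq]
          simp only [dist_self]
          rw [max_eq_right dist_nonneg]
          have h1 : α k s = u k ⟨s, hsmem⟩ := rfl
          have h2 : Y s = y ⟨s, hsmem⟩ := hYicc s hsmem
          rw [h1, h2]
          calc dist (u k ⟨s, hsmem⟩) (y ⟨s, hsmem⟩) ≤ dist (u k) y :=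
                ContinuousMap.dist_apply_le_dist _
            _ < r := hclose
            _ ≤ δ := min_le_left _ _
        have := hδ' hdd
        rw [dist_eq_norm] at this
        exact this.le
      calc ‖∫ s in t₀..t, (F (s, α k s) - F (s, Y s))‖ ≤ ε₁ * |t - t₀| :=
            norm_integral_le_of_norm_le_const hptwise
        _ ≤ ε₁ * T := by
            apply mul_le_mul_of_nonneg_left ?_ hε₁.le
            rw [abs_le]
            constructor <;> [linarith [ht.1]; linarith [ht.2]]
        _ ≤ ε/3 := by
            rw [hε₁def, div_mul_eq_mul_div, div_le_div_iff₀ (by positivity) (by norm_num : (0:ℝ) < 3)]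
            nlinarith [hε.le, hT0.le]
    calc dist (Y t) (x₀ + ∫ s in t₀..t, F (s, Y s))
        ≤ dist (Y t) (α k t) + dist (α k t) (x₀ + ∫ s in t₀..t, F (s, α k s))
          + dist (x₀ + ∫ s in t₀..t, F (s, α k s)) (x₀ + ∫ s in t₀..t, F (s, Y s)) :=
          dist_triangle4 _ _ _ _
      _ ≤ ε/3 + ε/3 + ε/3 := by linarith [d1, d2, d3]
      _ = ε := by ring
  -- final solution
  set G : ℝ → EuclideanSpace ℝ (Fin n) := fun s => F (s, Y s) with hGdef
  have hGc : Continuous G := hFcont.comp (continuous_id.prodMk hYcont)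
  set x : ℝ → EuclideanSpace ℝ (Fin n) := fun t => x₀ + ∫ s in t₀..t, G s with hxdef
  refine ⟨t₀ - T, t₀ + T, by linarith, ⟨by linarith, by linarith⟩, x, ?_, ?_⟩
  · rw [hxdef]
    simp
  · intro t htIoo
    have htIcc : t ∈ Icc (t₀ - T) (t₀ + T) := Ioo_subset_Icc_self htIoo
    have hxY : x t = Y t := by
      rw [hxdef]
      simp only
      rw [← hlimit t htIcc]
    have hder : HasDerivAt x (G t) t := by
      have h1 : HasDerivAt (fun v => ∫ s in t₀..v, G s) (G t) t := by
        apply integral_hasDerivAt_right (hGc.intervalIntegrable _ _)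
          hGc.stronglyMeasurable.stronglyMeasurableAtFilter hGc.continuousAt
      simpa [hxdef] using h1.const_add x₀
    have hGt : G t = f (t, x t) := by
      rw [hGdef]
      simp only
      rw [hxY]
      rw [hFdef]
      simp only
      rw [hcleq t (hIccsub htIcc), ballRetract_of_mem (hYball t htIcc)]
    rwa [hGt] at hder

end
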